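/- arXiv:2309.03368 — 2 statements merged into one kernel-verified Lean document; each statement's English description precedes it below -/
import Mathlib

section
/- Fix v* ∈ ℝⁿ, u ∈ ℝⁿ, ω ∈ S^{n-1}, and define P(v*,u,ω) = e^{-|u'-v*|²} + e^{-|v'-v*|²} - e^{-|u-v*|²} - 1, where u' = u - [(u-v*)·ω]ω and v' = v* + [(u-v*)·ω]ω. Then P(v*,u,ω) = (1 - e^{|(u-v*)·ω|²})(e^{-|(u-v*)·ω|²} - e^{-|u-v*|²}). In particular P(v*,u,ω) ≤ 0, with equality if and only if ω ⊥ (v*-u) or ω = ±(v*-u)/|v*-u| (when u ≠ v*). -/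
open scoped RealInnerProductSpace

theorem exp_factor_aux (x y : ℝ) :
    Real.exp (-(y - x)) + Real.exp (-x) - Real.exp (-y) - 1 =
      (1 - Real.exp x) * (Real.exp (-x) - Real.exp (-y)) := by
  have h1 : Real.exp x * Real.exp (-x) = 1 := by
    rw [← Real.exp_add]; simp
  have h2 : Real.exp x * Real.exp (-y) = Real.exp (-(y - x)) := by
    rw [← Real.exp_add]; ring_nf
  linear_combination h1 - h2

/-- properties of the function
`P(v*,u,ω) = e^{-|u'-v*|²} + e^{-|v'-v*|²} - e^{-|u-v*|²} - 1`, where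
`u' = u - [(u-v*)·ω]ω` and `v' = v* + [(u-v*)·ω]ω`. -/
theorem stmt3 {n : ℕ} (vs u ω : EuclideanSpace ℝ (Fin n)) (hω : ‖ω‖ = 1)
    (P : ℝ)
    (hP : P = Real.exp (-‖(u - ⟪u - vs, ω⟫ • ω) - vs‖ ^ 2)
        + Real.exp (-‖(vs + ⟪u - vs, ω⟫ • ω) - vs‖ ^ 2)
        - Real.exp (-‖u - vs‖ ^ 2) - 1) :
    P = (1 - Real.exp (|⟪u - vs, ω⟫| ^ 2)) *
        (Real.exp (-|⟪u - vs, ω⟫| ^ 2) - Real.exp (-‖u - vs‖ ^ 2)) ∧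
    P ≤ 0 ∧
    (u ≠ vs →
      (P = 0 ↔ ⟪vs - u, ω⟫ = 0 ∨ ω = ‖vs - u‖⁻¹ • (vs - u) ∨ ω = -(‖vs - u‖⁻¹ • (vs - u)))) := by
  set t : ℝ := ⟪u - vs, ω⟫ with ht
  set d : EuclideanSpace ℝ (Fin n) := u - vs with hd
  have habs : |t| ^ 2 = t ^ 2 := sq_abs t
  have hv' : ‖(vs + t • ω) - vs‖ ^ 2 = t ^ 2 := by
    have h0 : (vs + t • ω) - vs = t • ω := by abel
    rw [h0, norm_smul, hω, mul_one, Real.norm_eq_abs, sq_abs]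
  have hu' : ‖(u - t • ω) - vs‖ ^ 2 = ‖d‖ ^ 2 - t ^ 2 := by
    have h0 : (u - t • ω) - vs = d - t • ω := by rw [hd]; abel
    rw [h0, @norm_sub_sq_real]
    have h1 : ⟪d, t • ω⟫ = t * t := by
      rw [real_inner_smul_right, ← ht]
    have h2 : ‖t • ω‖ ^ 2 = t ^ 2 := by
      rw [norm_smul, hω, mul_one, Real.norm_eq_abs, sq_abs]
    rw [h1, h2]; ring
  have hfact : P = (1 - Real.exp (t ^ 2)) *
      (Real.exp (-t ^ 2) - Real.exp (-‖d‖ ^ 2)) := by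
    rw [hP, hv', hu', ← exp_factor_aux (t ^ 2) (‖d‖ ^ 2)]
  have hts : t ^ 2 ≤ ‖d‖ ^ 2 := by
    have h := abs_real_inner_le_norm d ω
    rw [hω, mul_one] at h
    calc t ^ 2 = |t| ^ 2 := (sq_abs t).symm
      _ ≤ ‖d‖ ^ 2 := by
        apply pow_le_pow_left₀ (abs_nonneg _) _
        rw [ht, hd] at *; exact h
  have hfac1 : 1 - Real.exp (t ^ 2) ≤ 0 := by
    have := Real.one_le_exp (sq_nonneg t); linarith
  have hfac2 : 0 ≤ Real.exp (-t ^ 2) - Real.exp (-‖d‖ ^ 2) := by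
    have := Real.exp_le_exp.2 (neg_le_neg hts); linarith
  have hflip : ⟪vs - u, ω⟫ = -t := by
    rw [ht, hd, show vs - u = -(u - vs) by abel, inner_neg_left]
  refine ⟨by rw [hfact, habs], ?_, ?_⟩
  · rw [hfact]; exact mul_nonpos_of_nonpos_of_nonneg hfac1 hfac2
  · intro hne
    have hd0 : d ≠ 0 := sub_ne_zero.2 hne
    have hdn : (0:ℝ) < ‖d‖ := norm_pos_iff.2 hd0
    have hdne : ‖d‖ ≠ 0 := ne_of_gt hdn
    constructor
    · intro hP0
      rw [hfact] at hP0
      rcases mul_eq_zero.1 hP0 with h | h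
      · have h1 : Real.exp (t ^ 2) = 1 := by linarith
        have ht2 : t ^ 2 = 0 := (Real.exp_eq_one_iff _).1 h1
        have ht0 : t = 0 := by nlinarith
        left; rw [hflip, ht0, neg_zero]
      · have ht2 : t ^ 2 = ‖d‖ ^ 2 := by
          have h1 : Real.exp (-t ^ 2) = Real.exp (-‖d‖ ^ 2) := by linarith
          have := Real.exp_eq_exp.1 h1
          linarith
        have habs2 : |t| = ‖d‖ := by
          nlinarith [abs_nonneg t, sq_abs t]
        rcases (abs_eq (le_of_lt hdn)).mp habs2 with h1 | h1
        · -- t = ‖d‖ → ω = ‖d‖⁻¹ • d = -(‖vs-u‖⁻¹ • (vs-u))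
          have hin : ⟪d, ω⟫ = ‖d‖ * ‖ω‖ := by rw [hω, mul_one, ← ht]; exact h1
          have hpar := inner_eq_norm_mul_iff_real.mp hin
          rw [hω, one_smul] at hpar
          right; right
          have hω2 : ω = ‖d‖⁻¹ • d := by
            calc ω = ‖d‖⁻¹ • (‖d‖ • ω) := by
                  rw [smul_smul, inv_mul_cancel₀ hdne, one_smul]
              _ = ‖d‖⁻¹ • d := by rw [← hpar]
          rw [hω2, hd, show vs - u = -(u - vs) by abel, norm_neg, smul_neg, neg_neg]
        · -- t = -‖d‖ → ω = ‖vs-u‖⁻¹ • (vs-u)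
          have hin : ⟪d, -ω⟫ = ‖d‖ * ‖(-ω)‖ := by
            rw [inner_neg_right, norm_neg, hω, mul_one, ← ht, h1]; ring
          have hpar := inner_eq_norm_mul_iff_real.mp hin
          rw [norm_neg, hω, one_smul] at hpar
          right; left
          have hω2 : -ω = ‖d‖⁻¹ • d := by
            calc -ω = ‖d‖⁻¹ • (‖d‖ • -ω) := by
                  rw [smul_smul, inv_mul_cancel₀ hdne, one_smul]
              _ = ‖d‖⁻¹ • d := by rw [← hpar]
          have : ω = ‖d‖⁻¹ • (-d) := by rw [smul_neg, ← hω2, neg_neg]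
          rw [this, hd, show vs - u = -(u - vs) by abel, norm_neg]
    · have hvsu : vs - u = -d := by rw [hd]; abel
      have hnv : ‖vs - u‖ = ‖d‖ := by rw [hvsu, norm_neg]
      have hinner : ⟪d, ‖vs - u‖⁻¹ • (vs - u)⟫ = -‖d‖ := by
        rw [hvsu, norm_neg, smul_neg, inner_neg_right, real_inner_smul_right,
          real_inner_self_eq_norm_sq]
        field_simp
      intro hcase
      rcases hcase with h | h | h
      · have ht0 : t = 0 := by rw [hflip] at h; linarith
        rw [hfact, ht0]; simp
      · have ht0 : t = -‖d‖ := by rw [ht, h]; exact hinner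
        have hsq : (-‖d‖ : ℝ) ^ 2 = ‖d‖ ^ 2 := by ring
        rw [hfact, ht0, hsq]; simp
      · have ht0 : t = ‖d‖ := by
          rw [ht, h, inner_neg_right, hinner, neg_neg]
        rw [hfact, ht0]; simp
end

section
/- Let q ∈ L¹(ℝ^{n+1}) be compactly supported, let r > 0, and fix (τ,ξ) ∈ ℝ×ℝⁿ with ξ ≠ 0 and |τ| ≤ r|ξ|. Choose a unit vector ζ with ξ·ζ = 0 and set v = -(τ/|ξ|²)ξ + (r² - τ²/|ξ|²)^{1/2} ζ. Then |v| = r, τ = -v·ξ, and ∫_{ℝⁿ} L_r q(y,v) e^{-iy·ξ} dy = q̂(τ,ξ), where L_r q(y,v) = ∫_ℝ q(s, y+sv) ds is the light ray transform and q̂ is the (n+1)-dimensional Fourier transform of q. -/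
open MeasureTheory
open scoped RealInnerProductSpace

/-- for integrable compactly supported `q`, a spacelike frequency
`(τ,ξ)` with `|τ| ≤ r|ξ|`, and `v = -(τ/|ξ|²)ξ + (r² - τ²/|ξ|²)^{1/2} ζ` with `ζ ⊥ ξ`
a unit vector, one has `|v| = r`, `τ = -v·ξ`, and the Fourier transform (in `y`) of
the light ray transform `L_r q(·,v)` equals `q̂(τ,ξ)`. -/
theorem stmt11 {n : ℕ} (hn : 2 ≤ n) (r : ℝ) (hr : 0 < r)
    (q : ℝ × EuclideanSpace ℝ (Fin n) → ℂ)
    (hq : Integrable q) (hsupp : HasCompactSupport q)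
    (τ : ℝ) (ξ ζ : EuclideanSpace ℝ (Fin n)) (hξ : ξ ≠ 0)
    (hτ : |τ| ≤ r * ‖ξ‖) (hζ : ‖ζ‖ = 1) (horth : ⟪ξ, ζ⟫ = 0)
    (v : EuclideanSpace ℝ (Fin n))
    (hv : v = (-(τ / ‖ξ‖ ^ 2)) • ξ + Real.sqrt (r ^ 2 - τ ^ 2 / ‖ξ‖ ^ 2) • ζ) :
    ‖v‖ = r ∧ τ = -⟪v, ξ⟫ ∧
    (∫ y : EuclideanSpace ℝ (Fin n),
        (∫ s : ℝ, q (s, y + s • v)) * Complex.exp (-Complex.I * (⟪y, ξ⟫ : ℝ)))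
      = ∫ p : ℝ × EuclideanSpace ℝ (Fin n),
          q p * Complex.exp (-Complex.I * ((p.1 * τ + ⟪p.2, ξ⟫ : ℝ))) := by
  have hξ' : (0:ℝ) < ‖ξ‖ := norm_pos_iff.mpr hξ
  have hξ'' : ‖ξ‖ ≠ 0 := ne_of_gt hξ'
  set a : ℝ := -(τ / ‖ξ‖ ^ 2) with ha
  set b : ℝ := Real.sqrt (r ^ 2 - τ ^ 2 / ‖ξ‖ ^ 2) with hb
  have hnonneg : (0:ℝ) ≤ r ^ 2 - τ ^ 2 / ‖ξ‖ ^ 2 := by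
    have h1 : τ ^ 2 ≤ (r * ‖ξ‖) ^ 2 := by
      rw [← sq_abs]; exact pow_le_pow_left₀ (abs_nonneg τ) hτ 2
    rw [sub_nonneg, div_le_iff₀ (by positivity)]
    nlinarith
  have hb2 : b ^ 2 = r ^ 2 - τ ^ 2 / ‖ξ‖ ^ 2 := Real.sq_sqrt hnonneg
  -- inner products
  have hinner_cross : ⟪(a • ξ : EuclideanSpace ℝ (Fin n)), (b • ζ : EuclideanSpace ℝ (Fin n))⟫ = 0 := by
    rw [real_inner_smul_left, real_inner_smul_right, horth]; ring
  -- first claim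
  have hnormv : ‖v‖ = r := by
    have hsq : ‖v‖ ^ 2 = r ^ 2 := by
      rw [hv, norm_add_sq_real, hinner_cross]
      rw [norm_smul, norm_smul, hζ]
      simp only [Real.norm_eq_abs, mul_one, mul_pow]
      rw [sq_abs, sq_abs, hb2]
      field_simp [ha]
      rw [ha]; field_simp; ring
    nlinarith [norm_nonneg v]
  -- second claim
  have horth' : ⟪ζ, ξ⟫ = 0 := by rw [real_inner_comm]; exact horth
  have hvξ : ⟪v, ξ⟫ = -τ := by
    rw [hv, inner_add_left, real_inner_smul_left, real_inner_smul_left,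
      horth', real_inner_self_eq_norm_sq]
    field_simp [ha]
    rw [ha]; field_simp; ring
  refine ⟨hnormv, by rw [hvξ]; ring, ?_⟩
  -- the integral identity
  -- the shear map is measure preserving
  have hT : MeasurePreserving (fun p : ℝ × EuclideanSpace ℝ (Fin n) => (p.1, p.2 + p.1 • v))
      (volume : Measure (ℝ × EuclideanSpace ℝ (Fin n)))
      (volume : Measure (ℝ × EuclideanSpace ℝ (Fin n))) := by
    rw [Measure.volume_eq_prod]
    exact (MeasurePreserving.id volume).skew_product
      (measurable_snd.add ((measurable_fst.smul measurable_const)))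
      (Filter.Eventually.of_forall fun s => map_add_right_eq_self volume (s • v))
  -- integrability of the sheared function
  have hqshear : Integrable (fun p : ℝ × EuclideanSpace ℝ (Fin n) => q (p.1, p.2 + p.1 • v)) := by
    exact (hT.integrable_comp hq.aestronglyMeasurable).mpr hq
  -- the phase factor is continuous with norm 1
  have hexp_cont : Continuous fun y : EuclideanSpace ℝ (Fin n) =>
      Complex.exp (-Complex.I * (⟪y, ξ⟫ : ℝ)) := by
    refine Complex.continuous_exp.comp (continuous_const.mul ?_)
    exact Complex.continuous_ofReal.comp (continuous_id.inner continuous_const)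
  have hexp_norm : ∀ x : ℝ, ‖Complex.exp (-Complex.I * (x : ℂ))‖ = 1 := by
    intro x
    rw [Complex.norm_exp]
    simp
  -- the full integrand as function on the product space
  set F : ℝ × EuclideanSpace ℝ (Fin n) → ℂ := fun p => q (p.1, p.2 + p.1 • v) *
      Complex.exp (-Complex.I * (⟪p.2, ξ⟫ : ℝ)) with hF
  have hF_int : Integrable F := by
    have := Integrable.bdd_mul (c := 1) hqshear
      ((hexp_cont.comp continuous_snd).aestronglyMeasurable)
      (Filter.Eventually.of_forall fun p => le_of_eq (hexp_norm _))
    refine this.congr (Filter.Eventually.of_forall fun p => ?_)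
    simp only [hF, Function.comp]
    ring
  have hF_int' : Integrable (Function.uncurry fun s (y : EuclideanSpace ℝ (Fin n)) => F (s, y))
      ((volume : Measure ℝ).prod (volume : Measure (EuclideanSpace ℝ (Fin n)))) := by
    rw [← Measure.volume_eq_prod]; exact hF_int
  -- RHS integrand integrable
  have hRHS_cont : Continuous fun p : ℝ × EuclideanSpace ℝ (Fin n) =>
      Complex.exp (-Complex.I * ((p.1 * τ + ⟪p.2, ξ⟫ : ℝ))) := by
    refine Complex.continuous_exp.comp (continuous_const.mul ?_)
    refine Complex.continuous_ofReal.comp ?_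
    exact (continuous_fst.mul continuous_const).add
      (continuous_snd.inner continuous_const)
  have hRHS_int : Integrable (fun p : ℝ × EuclideanSpace ℝ (Fin n) =>
      q p * Complex.exp (-Complex.I * ((p.1 * τ + ⟪p.2, ξ⟫ : ℝ)))) := by
    have := Integrable.bdd_mul (c := 1) hq hRHS_cont.aestronglyMeasurable
      (Filter.Eventually.of_forall fun p => le_of_eq (hexp_norm _))
    refine this.congr (Filter.Eventually.of_forall fun p => ?_)
    ring
  -- Step 1: RHS = iterated integral
  have step1 : (∫ p : ℝ × EuclideanSpace ℝ (Fin n),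
        q p * Complex.exp (-Complex.I * ((p.1 * τ + ⟪p.2, ξ⟫ : ℝ))))
      = ∫ s : ℝ, ∫ x : EuclideanSpace ℝ (Fin n),
          q (s, x) * Complex.exp (-Complex.I * ((s * τ + ⟪x, ξ⟫ : ℝ))) := by
    rw [Measure.volume_eq_prod] at hRHS_int ⊢
    exact integral_prod _ hRHS_int
  -- Step 2: fiberwise translation
  have step2 : ∀ s : ℝ,
      (∫ x : EuclideanSpace ℝ (Fin n),
          q (s, x) * Complex.exp (-Complex.I * ((s * τ + ⟪x, ξ⟫ : ℝ))))
      = ∫ y : EuclideanSpace ℝ (Fin n), F (s, y) := by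
    intro s
    rw [← integral_add_right_eq_self
      (fun x : EuclideanSpace ℝ (Fin n) =>
        q (s, x) * Complex.exp (-Complex.I * ((s * τ + ⟪x, ξ⟫ : ℝ)))) (s • v)]
    refine integral_congr_ae (Filter.Eventually.of_forall fun y => ?_)
    simp only [hF]
    have hphase : s * τ + ⟪y + s • v, ξ⟫ = ⟪y, ξ⟫ := by
      rw [inner_add_left, real_inner_smul_left, hvξ]; ring
    rw [hphase]
  -- Step 3: Fubini swap
  have step3 : (∫ s : ℝ, ∫ y : EuclideanSpace ℝ (Fin n), F (s, y))
      = ∫ y : EuclideanSpace ℝ (Fin n), ∫ s : ℝ, F (s, y) :=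
    integral_integral_swap hF_int'
  -- Step 4: pull the phase out of the inner integral
  have step4 : ∀ y : EuclideanSpace ℝ (Fin n), (∫ s : ℝ, F (s, y))
      = (∫ s : ℝ, q (s, y + s • v)) * Complex.exp (-Complex.I * (⟪y, ξ⟫ : ℝ)) := by
    intro y
    simp only [hF]
    rw [integral_mul_const]
  calc (∫ y : EuclideanSpace ℝ (Fin n),
        (∫ s : ℝ, q (s, y + s • v)) * Complex.exp (-Complex.I * (⟪y, ξ⟫ : ℝ)))
      = ∫ y : EuclideanSpace ℝ (Fin n), ∫ s : ℝ, F (s, y) :=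
        integral_congr_ae (Filter.Eventually.of_forall fun y => (step4 y).symm)
    _ = ∫ s : ℝ, ∫ y : EuclideanSpace ℝ (Fin n), F (s, y) := step3.symm
    _ = ∫ s : ℝ, ∫ x : EuclideanSpace ℝ (Fin n),
          q (s, x) * Complex.exp (-Complex.I * ((s * τ + ⟪x, ξ⟫ : ℝ))) :=
        integral_congr_ae (Filter.Eventually.of_forall fun s => (step2 s).symm)
    _ = _ := step1.symm
end
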